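/- Let (X_i) be a stationary ergodic Markov chain with transition densities p_b(x,y) and invariant density π_b, indexed by b in a measurable parameter set 𝓑 with prior Π. Let L_n(b) = (π_b(X_0)/π_{b_0}(X_0)) ∏_{i=1}^n p_b(X_{i-1}, X_i)/p_{b_0}(X_{i-1}, X_i) denote the likelihood ratio. Suppose Π(b : KL(b_0, b) < ε) > 0 for every ε > 0, where KL(b_0, b) is the Kullback–Leibler divergence between the transition kernels averaged over the invariant measure, and suppose (1/n) log L_n(b) → −KL(b_0, b) almost surely for each b. If measurable sets C_n ⊂ 𝓑 satisfy e^{nc} ∫_{C_n} L_n(b) Π(db) → 0 almost surely for some c > 0, then the posterior probability Π(C_n | X_0, …, X_n) = ∫_{C_n} L_n dΠ / ∫_𝓑 L_n dΠ → 0 almost surely. -/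

import Mathlib

open MeasureTheory Filter

/-- Posterior consistency lemma for Markov chain models (Lemma 5.2): if the prior puts
positive mass on all Kullback–Leibler neighborhoods of the truth, the normalized
log-likelihood ratio converges a.s. to minus the KL divergence, and the numerator
`∫_{C_n} L_n dΠ` decays faster than `e^{-nc}` a.s. for some `c > 0`, then the posterior
mass of `C_n` tends to `0` almost surely. -/
theorem posterior_mass_tendsto_zero
    {Ω 𝓑 : Type*} [MeasurableSpace Ω] [MeasurableSpace 𝓑]
    (P : Measure Ω) [IsProbabilityMeasure P]
    (Pri : Measure 𝓑) [IsProbabilityMeasure Pri]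
    (KL : 𝓑 → ℝ) (hKLmeas : Measurable KL) (hKL0 : ∀ b, 0 ≤ KL b)
    (L : ℕ → 𝓑 → Ω → ℝ)
    (hLmeas : ∀ n, Measurable (Function.uncurry (L n)))
    (hLpos : ∀ n b ω, 0 < L n b ω)
    (hLint : ∀ n, ∀ᵐ ω ∂P, Integrable (fun b => L n b ω) Pri)
    (hprior : ∀ ε : ℝ, 0 < ε → 0 < Pri {b | KL b < ε})
    (hLLN : ∀ b, ∀ᵐ ω ∂P,
      Tendsto (fun n : ℕ => Real.log (L n b ω) / n) atTop (nhds (-(KL b))))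
    (C : ℕ → Set 𝓑) (hC : ∀ n, MeasurableSet (C n))
    (c : ℝ) (hc : 0 < c)
    (hnum : ∀ᵐ ω ∂P,
      Tendsto (fun n : ℕ => Real.exp (n * c) * ∫ b in C n, L n b ω ∂Pri) atTop (nhds 0)) :
    ∀ᵐ ω ∂P,
      Tendsto (fun n : ℕ => (∫ b in C n, L n b ω ∂Pri) / ∫ b, L n b ω ∂Pri)
        atTop (nhds 0) := by
  classical
  -- the measurable set where LLN holds, as a subset of 𝓑 × Ω
  set S : Set (𝓑 × Ω) :=
    {p | Tendsto (fun n : ℕ => Real.log (L n p.1 p.2) / n) atTop (nhds (-(KL p.1)))} with hS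
  have hSmeas : MeasurableSet S := by
    apply measurableSet_tendsto_fun
    · intro n
      exact ((hLmeas n).log).div_const n
    · exact (hKLmeas.comp measurable_fst).neg
  -- swap the a.e. quantifiers
  have hprod : ∀ᵐ z ∂(Pri.prod P), z ∈ S := by
    rw [Measure.ae_prod_mem_iff_ae_ae_mem hSmeas]
    exact Filter.Eventually.of_forall fun b => hLLN b
  have hswap : ∀ᵐ z ∂(P.prod Pri), z ∈ Prod.swap ⁻¹' S := by
    have h1 : (Pri.prod P) Sᶜ = 0 := by
      exact ae_iff.mp hprod
    have h2 : (P.prod Pri) (Prod.swap ⁻¹' Sᶜ) = 0 := by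
      rw [← Measure.prod_swap (μ := P) (ν := Pri)] at h1
      rwa [Measure.map_apply measurable_swap hSmeas.compl] at h1
    rw [ae_iff]
    exact h2
  have hswap' : ∀ᵐ ω ∂P, ∀ᵐ b ∂Pri, (b, ω) ∈ S := Measure.ae_ae_of_ae_prod hswap
  have hint' : ∀ᵐ ω ∂P, ∀ n, Integrable (fun b => L n b ω) Pri :=
    (ae_all_iff).mpr hLint
  filter_upwards [hswap', hint', hnum] with ω hLLNω hIω hNω
  -- notation
  set A : Set 𝓑 := {b | KL b < c / 4} with hA
  have hAmeas : MeasurableSet A := hKLmeas measurableSet_Iio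
  have hAPos : 0 < Pri A := hprior _ (by linarith)
  have hmeasb : ∀ n : ℕ, Measurable (fun b => L n b ω) := fun n =>
    (hLmeas n).comp (measurable_id.prodMk measurable_const)
  -- the key lower bound on the denominator, via Fatou
  have hFatou : ∀ᶠ n : ℕ in atTop,
      Real.exp (-(n * (c / 2))) ≤ ∫ b, L n b ω ∂Pri := by
    set g : ℕ → 𝓑 → ENNReal :=
      fun n b => ENNReal.ofReal (Real.exp (n * (c / 2)) * L n b ω) with hg
    have hgmeas : ∀ n, Measurable (g n) := fun n =>
      (((hmeasb n).const_mul _).ennreal_ofReal)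
    -- on A, g n b → ∞
    have hlim : ∀ᵐ b ∂(Pri.restrict A), Tendsto (fun n => g n b) atTop (nhds ⊤) := by
      rw [ae_restrict_iff' hAmeas]
      filter_upwards [hLLNω] with b hb hbA
      have hKb : KL b < c / 4 := hbA
      -- exp(n c/2) * L n b ω → ∞
      have hxx : Tendsto (fun n : ℕ =>
          Real.exp ((n : ℝ) * (c / 2) + Real.log (L n b ω))) atTop atTop := by
        apply Real.tendsto_exp_atTop.comp
        -- (n)(c/2) + log L = n * (c/2 + log L / n) for n ≥ 1
        have hsum : Tendsto (fun n : ℕ => c / 2 + Real.log (L n b ω) / n) atTop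
            (nhds (c / 2 + -(KL b))) := tendsto_const_nhds.add hb
        have hpos : 0 < c / 2 + -(KL b) := by linarith
        have hN : Tendsto (fun n : ℕ => (n : ℝ)) atTop atTop :=
          tendsto_natCast_atTop_atTop
        have hmul : Tendsto (fun n : ℕ =>
            (n : ℝ) * (c / 2 + Real.log (L n b ω) / n)) atTop atTop :=
          Filter.Tendsto.atTop_mul_pos hpos hN hsum
        apply hmul.congr'
        filter_upwards [eventually_ge_atTop 1] with n hn
        have hn0 : (n : ℝ) ≠ 0 := by positivity
        field_simp
      have hxx' : Tendsto (fun n : ℕ =>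
          Real.exp ((n : ℝ) * (c / 2)) * L n b ω) atTop atTop := by
        apply hxx.congr
        intro n
        rw [Real.exp_add, Real.exp_log (hLpos n b ω)]
      exact ENNReal.tendsto_ofReal_atTop.comp hxx'
    have hliminf : (⊤ : ENNReal) ≤ Filter.liminf (fun n => ∫⁻ b in A, g n b ∂Pri) atTop := by
      calc (⊤ : ENNReal) = ∫⁻ _ in A, (⊤ : ENNReal) ∂Pri := by
            rw [setLIntegral_const, ENNReal.top_mul hAPos.ne']
        _ = ∫⁻ b in A, Filter.liminf (fun n => g n b) atTop ∂Pri := by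
            apply lintegral_congr_ae
            filter_upwards [hlim] with b hb
            rw [hb.liminf_eq]
        _ ≤ Filter.liminf (fun n => ∫⁻ b in A, g n b ∂Pri) atTop :=
            lintegral_liminf_le fun n => hgmeas n
    have htop : Filter.liminf (fun n => ∫⁻ b in A, g n b ∂Pri) atTop = ⊤ :=
      top_le_iff.mp hliminf
    have hev : ∀ᶠ n : ℕ in atTop, (1 : ENNReal) < ∫⁻ b in A, g n b ∂Pri :=
      eventually_lt_of_lt_liminf (htop ▸ ENNReal.one_lt_top)
    filter_upwards [hev] with n hn
    -- convert the lintegral to an integral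
    have hintA : Integrable (fun b => Real.exp ((n : ℝ) * (c / 2)) * L n b ω)
        (Pri.restrict A) := (((hIω n).restrict (s := A)).const_mul _)
    have heq : ∫⁻ b in A, g n b ∂Pri
        = ENNReal.ofReal (∫ b in A, Real.exp ((n : ℝ) * (c / 2)) * L n b ω ∂Pri) := by
      rw [← ofReal_integral_eq_lintegral_ofReal hintA]
      exact Filter.Eventually.of_forall fun b =>
        mul_nonneg (Real.exp_pos _).le (hLpos n b ω).le
    rw [heq] at hn
    have h1 : (1 : ℝ) ≤ ∫ b in A, Real.exp ((n : ℝ) * (c / 2)) * L n b ω ∂Pri := by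
      by_contra h
      push_neg at h
      have : ENNReal.ofReal (∫ b in A, Real.exp ((n : ℝ) * (c / 2)) * L n b ω ∂Pri) ≤ 1 := by
        refine le_trans (ENNReal.ofReal_le_ofReal h.le) (by simp)
      exact absurd this (not_le.mpr hn)
    rw [integral_const_mul] at h1
    have hALn : Real.exp (-((n : ℝ) * (c / 2))) ≤ ∫ b in A, L n b ω ∂Pri := by
      have he := Real.exp_pos ((n : ℝ) * (c / 2))
      rw [Real.exp_neg]
      calc (Real.exp ((n : ℝ) * (c / 2)))⁻¹ = (Real.exp ((n : ℝ) * (c / 2)))⁻¹ * 1 :=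
            (mul_one _).symm
        _ ≤ (Real.exp ((n : ℝ) * (c / 2)))⁻¹
            * (Real.exp ((n : ℝ) * (c / 2)) * ∫ b in A, L n b ω ∂Pri) :=
            mul_le_mul_of_nonneg_left h1 (by positivity)
        _ = ∫ b in A, L n b ω ∂Pri := by field_simp
    refine hALn.trans ?_
    exact setIntegral_le_integral (hIω n) (Filter.Eventually.of_forall fun b => (hLpos n b ω).le)
  -- now the squeeze
  have hub : ∀ᶠ n : ℕ in atTop,
      (∫ b in C n, L n b ω ∂Pri) / ∫ b, L n b ω ∂Pri
        ≤ (Real.exp ((n : ℝ) * c) * ∫ b in C n, L n b ω ∂Pri) * Real.exp (-((n : ℝ) * (c / 2))) := by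
    filter_upwards [hFatou] with n hn
    have hNn : 0 ≤ ∫ b in C n, L n b ω ∂Pri :=
      setIntegral_nonneg (hC n) fun b _ => (hLpos n b ω).le
    have hd : 0 < Real.exp (-((n : ℝ) * (c / 2))) := Real.exp_pos _
    have hD : 0 < ∫ b, L n b ω ∂Pri := lt_of_lt_of_le hd hn
    rw [div_le_iff₀ hD]
    have key : Real.exp ((n : ℝ) * c) * Real.exp (-((n : ℝ) * (c / 2)))
        * Real.exp (-((n : ℝ) * (c / 2))) = 1 := by
      rw [← Real.exp_add, ← Real.exp_add]
      norm_num
      ring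
    calc ∫ b in C n, L n b ω ∂Pri
        = (Real.exp ((n : ℝ) * c) * (∫ b in C n, L n b ω ∂Pri) * Real.exp (-((n : ℝ) * (c / 2))))
          * Real.exp (-((n : ℝ) * (c / 2))) := by
          rw [mul_comm (Real.exp ((n : ℝ) * c)) (∫ b in C n, L n b ω ∂Pri), mul_assoc,
            mul_assoc, ← mul_assoc (Real.exp ((n : ℝ) * c)), key, mul_one]
      _ ≤ (Real.exp ((n : ℝ) * c) * (∫ b in C n, L n b ω ∂Pri) * Real.exp (-((n : ℝ) * (c / 2))))
          * ∫ b, L n b ω ∂Pri := by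
          apply mul_le_mul_of_nonneg_left hn
          positivity
  have hlb : ∀ᶠ n : ℕ in atTop,
      (0 : ℝ) ≤ (∫ b in C n, L n b ω ∂Pri) / ∫ b, L n b ω ∂Pri := by
    filter_upwards [hFatou] with n hn
    have hNn : 0 ≤ ∫ b in C n, L n b ω ∂Pri :=
      setIntegral_nonneg (hC n) fun b _ => (hLpos n b ω).le
    have hD : 0 < ∫ b, L n b ω ∂Pri := lt_of_lt_of_le (Real.exp_pos _) hn
    positivity
  have hub_lim : Tendsto (fun n : ℕ =>
      (Real.exp ((n : ℝ) * c) * ∫ b in C n, L n b ω ∂Pri) * Real.exp (-((n : ℝ) * (c / 2))))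
      atTop (nhds 0) := by
    have h2 : Tendsto (fun n : ℕ => Real.exp (-((n : ℝ) * (c / 2)))) atTop (nhds 0) := by
      apply Real.tendsto_exp_atBot.comp
      apply Filter.tendsto_neg_atTop_atBot.comp
      exact Filter.Tendsto.atTop_mul_const (by linarith) tendsto_natCast_atTop_atTop
    simpa using hNω.mul h2
  exact tendsto_of_tendsto_of_tendsto_of_le_of_le' tendsto_const_nhds hub_lim hlb hub
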